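/- Let G be a finite simple graph with positive integer vertex weights w, and let k be a positive integer. If G has a wvi(k)-set, then G has an irredundant wvi(k)-set. -/

import Mathlib

open SimpleGraph

variable {V : Type*}

/-- The vertex sets of the connected components of `G − S`
(the subgraph of `G` induced on the complement of `S`). -/
def ccSets (G : SimpleGraph V) (S : Set V) : Set (Set V) :=
  {D | ∃ c : (G.induce Sᶜ).ConnectedComponent, D = Subtype.val '' c.supp}

/-- The total weight of a set of vertices. -/
noncomputable def wsum (w : V → ℕ) (A : Set V) : ℕ := ∑ᶠ v ∈ A, w v

/-- The weight of a heaviest connected component of `G − S` (`0` if there is none). -/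
noncomputable def maxCC (G : SimpleGraph V) (w : V → ℕ) (S : Set V) : ℕ :=
  sSup (wsum w '' ccSets G S)

/-- `S` is a `wvi(k)`-set: `w(S) + max_{D ∈ cc(G−S)} w(D) ≤ k`. -/
def IsWviSet (G : SimpleGraph V) (w : V → ℕ) (k : ℕ) (S : Set V) : Prop :=
  wsum w S + maxCC G w S ≤ k

/-- A vertex `v` is redundant w.r.t. `S`: at most one connected component of `G − S`
contains a neighbor of `v`. -/
def Redundant (G : SimpleGraph V) (S : Set V) (v : V) : Prop :=
  {D ∈ ccSets G S | ∃ u ∈ D, G.Adj v u}.Subsingleton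

/-- `S` is irredundant if it contains no redundant vertex. -/
def Irredundant (G : SimpleGraph V) (S : Set V) : Prop :=
  ∀ v ∈ S, ¬ Redundant G S v

lemma wsum_eq [Fintype V] (w : V → ℕ) (A : Set V) :
    wsum w A = ∑ x ∈ A.toFinite.toFinset, w x := by
  classical
  rw [wsum, ← finsum_mem_coe_finset, Set.Finite.coe_toFinset]

lemma wsum_mono [Fintype V] (w : V → ℕ) {A B : Set V} (h : A ⊆ B) :
    wsum w A ≤ wsum w B := by
  classical
  rw [wsum_eq, wsum_eq]
  exact Finset.sum_le_sum_of_subset (Set.Finite.toFinset_subset_toFinset.mpr h)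

lemma wsum_insert [Fintype V] (w : V → ℕ) {A : Set V} {v : V} (hv : v ∉ A) :
    wsum w (insert v A) = w v + wsum w A := by
  classical
  rw [wsum_eq, wsum_eq]
  rw [show (insert v A).toFinite.toFinset = insert v A.toFinite.toFinset by ext a; simp only [Set.Finite.mem_toFinset, Finset.mem_insert, Set.mem_insert_iff]]
  rw [Finset.sum_insert (by simpa using hv)]

lemma wsum_diff_singleton [Fintype V] (w : V → ℕ) {S : Set V} {v : V} (hv : v ∈ S) :
    wsum w S = w v + wsum w (S \ {v}) := by
  classical
  rw [← wsum_insert w (by simp : v ∉ S \ {v})]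
  congr 1
  simp [Set.insert_diff_singleton, Set.insert_eq_self.mpr hv]

lemma bddAbove_wsum_cc [Fintype V] (G : SimpleGraph V) (w : V → ℕ) (S : Set V) :
    BddAbove (wsum w '' ccSets G S) := by
  refine ⟨wsum w Set.univ, ?_⟩
  rintro x ⟨D, _, rfl⟩
  exact wsum_mono w (Set.subset_univ D)

lemma le_maxCC [Fintype V] (G : SimpleGraph V) (w : V → ℕ) {S D : Set V}
    (hD : D ∈ ccSets G S) : wsum w D ≤ maxCC G w S :=
  le_csSup (bddAbove_wsum_cc G w S) (Set.mem_image_of_mem _ hD)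

lemma maxCC_le (G : SimpleGraph V) (w : V → ℕ) {S : Set V} {m : ℕ}
    (h : ∀ D ∈ ccSets G S, wsum w D ≤ m) : maxCC G w S ≤ m := by
  apply csSup_le'
  rintro x ⟨D, hD, rfl⟩
  exact h D hD

lemma mem_image_supp (G : SimpleGraph V) {S : Set V} (x : ↥Sᶜ) (u : V) :
    u ∈ Subtype.val '' ((G.induce Sᶜ).connectedComponentMk x).supp ↔
      ∃ hu : u ∈ Sᶜ, (G.induce Sᶜ).Reachable ⟨u, hu⟩ x := by
  constructor
  · rintro ⟨⟨u, hu⟩, hsupp, rfl⟩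
    exact ⟨hu, (SimpleGraph.ConnectedComponent.eq).mp
      (ConnectedComponent.mem_supp_iff _ _ |>.mp hsupp)⟩
  · rintro ⟨hu, hr⟩
    exact ⟨⟨u, hu⟩, (ConnectedComponent.mem_supp_iff _ _).mpr
      ((SimpleGraph.ConnectedComponent.eq).mpr hr), rfl⟩

lemma walk_restrict (G : SimpleGraph V) {S T : Set V} (hST : Sᶜ ⊆ Tᶜ) :
    ∀ {a b : ↥Tᶜ} (p : (G.induce Tᶜ).Walk a b), (∀ x ∈ p.support, (x : V) ∈ Sᶜ) →
      ∀ (ha : (a : V) ∈ Sᶜ) (hb : (b : V) ∈ Sᶜ),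
        (G.induce Sᶜ).Reachable ⟨a, ha⟩ ⟨b, hb⟩ := by
  intro a b p
  induction p with
  | nil => intro _ ha hb; exact Reachable.refl _
  | @cons a c b h p ih =>
    intro hsup ha hb
    have hc : (c : V) ∈ Sᶜ := hsup c (by simp [Walk.support_cons])
    have hadj : (G.induce Sᶜ).Adj ⟨a, ha⟩ ⟨c, hc⟩ := h
    exact hadj.reachable.trans
      (ih (fun x hx => hsup x (by simp [Walk.support_cons, hx])) hc hb)

lemma maxCC_diff_le [Fintype V] (G : SimpleGraph V) (w : V → ℕ) {S : Set V} {v : V}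
    (hvS : v ∈ S) (hred : Redundant G S v) :
    maxCC G w (S \ {v}) ≤ w v + maxCC G w S := by
  classical
  have hsub : Sᶜ ⊆ (S \ {v})ᶜ := fun a ha hb => ha hb.1
  apply maxCC_le
  rintro A ⟨C, rfl⟩
  induction C using SimpleGraph.ConnectedComponent.ind with
  | _ x =>
  by_cases hvA : v ∈ Subtype.val ''
      ((G.induce (S \ {v})ᶜ).connectedComponentMk x).supp
  · -- the component containing v
    obtain ⟨hv', hrvx⟩ := (mem_image_supp G x v).mp hvA
    have claim : ∀ u' : ↥(S \ {v})ᶜ,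
        u' ∈ ((G.induce (S \ {v})ᶜ).connectedComponentMk x).supp → (u' : V) ≠ v →
        ∃ D ∈ ccSets G S, (∃ n ∈ D, G.Adj v n) ∧ (u' : V) ∈ D := by
      intro u' hu'supp hne
      have hru : (G.induce (S \ {v})ᶜ).Reachable u' ⟨v, hv'⟩ := by
        have h1 := (ConnectedComponent.mem_supp_iff _ _).mp hu'supp
        exact (ConnectedComponent.eq.mp h1).trans hrvx.symm
      obtain ⟨p⟩ := hru
      have hvend : (⟨v, hv'⟩ : ↥(S \ {v})ᶜ) ∈ p.support := p.end_mem_support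
      have hcount : (p.takeUntil _ hvend).support.count ⟨v, hv'⟩ = 1 :=
        by convert p.count_support_takeUntil_eq_one hvend using 2 <;> exact lawful_beq_subsingleton _ _
      have hcountrev :
          (p.takeUntil _ hvend).reverse.support.count (⟨v, hv'⟩ : ↥(S \ {v})ᶜ) = 1 := by
        rw [Walk.support_reverse, List.count_reverse]; exact hcount
      cases hq : (p.takeUntil _ hvend).reverse with
      | nil => exact absurd rfl hne
      | @cons _ n' _ hadj rest =>
        have hv'rest : (⟨v, hv'⟩ : ↥(S \ {v})ᶜ) ∉ rest.support := by
          rw [hq, Walk.support_cons, List.count_cons_self] at hcountrev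
          exact List.count_eq_zero.mp (by omega)
        have hrest_sup : ∀ z ∈ rest.support, (z : V) ∈ Sᶜ := by
          intro z hz
          have hzv : (z : V) ≠ v := by
            intro hzv
            have hz' : z = (⟨v, hv'⟩ : ↥(S \ {v})ᶜ) := Subtype.ext hzv
            exact hv'rest (hz' ▸ hz)
          have := z.2
          simp only [Set.mem_compl_iff, Set.mem_diff, Set.mem_singleton_iff, not_and,
            not_not] at this ⊢
          intro hzS; exact hzv (this hzS)
        have hadj' : G.Adj v (n' : V) := hadj
        have hnv : (n' : V) ≠ v := hadj'.ne'
        have hn : (n' : V) ∈ Sᶜ := hrest_sup n' rest.start_mem_support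
        have hu : (u' : V) ∈ Sᶜ := by
          have : u' ∈ rest.support := by
            have := rest.end_mem_support
            exact this
          exact hrest_sup u' this
        have hreach : (G.induce Sᶜ).Reachable ⟨n', hn⟩ ⟨u', hu⟩ := by
          have hrev : ∀ z ∈ rest.reverse.support, (z : V) ∈ Sᶜ := by
            intro z hz; exact hrest_sup z (by rwa [Walk.support_reverse, List.mem_reverse] at hz)
          exact (walk_restrict G hsub rest.reverse hrev hu hn).symm
        refine ⟨Subtype.val '' ((G.induce Sᶜ).connectedComponentMk ⟨n', hn⟩).supp,
          ⟨_, rfl⟩, ⟨(n' : V), (mem_image_supp G _ _).mpr ⟨hn, Reachable.refl _⟩, hadj'⟩,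
          (mem_image_supp G _ _).mpr ⟨hu, hreach.symm⟩⟩
    by_cases hex : ∃ u ∈ Subtype.val ''
        ((G.induce (S \ {v})ᶜ).connectedComponentMk x).supp, u ≠ v
    · obtain ⟨u₀, ⟨u₀', hu₀supp, rfl⟩, hu₀ne⟩ := hex
      obtain ⟨D₀, hD₀cc, hD₀n, hu₀D₀⟩ := claim u₀' hu₀supp hu₀ne
      have hsubA : Subtype.val '' ((G.induce (S \ {v})ᶜ).connectedComponentMk x).supp
          ⊆ insert v D₀ := by
        rintro u ⟨u', hu'supp, rfl⟩
        by_cases hcase : (u' : V) = v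
        · rw [hcase]; exact Set.mem_insert _ _
        · obtain ⟨D, hDcc, hDn, huD⟩ := claim u' hu'supp hcase
          have : D = D₀ := hred ⟨hDcc, hDn⟩ ⟨hD₀cc, hD₀n⟩
          exact Set.mem_insert_of_mem _ (this ▸ huD)
      have hvD₀ : v ∉ D₀ := by
        obtain ⟨c, rfl⟩ := hD₀cc
        rintro ⟨z, _, hzv⟩
        exact (hzv ▸ z.2) hvS
      calc wsum w _ ≤ wsum w (insert v D₀) := wsum_mono w hsubA
        _ = w v + wsum w D₀ := wsum_insert w hvD₀
        _ ≤ w v + maxCC G w S := by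
            exact Nat.add_le_add_left (le_maxCC G w hD₀cc) _
    · push_neg at hex
      have hsubA : Subtype.val '' ((G.induce (S \ {v})ᶜ).connectedComponentMk x).supp
          ⊆ {v} := fun u hu => hex u hu
      calc wsum w _ ≤ wsum w {v} := wsum_mono w hsubA
        _ = w v := by
            have : ({v} : Set V) = insert v ∅ := by simp
            rw [this, wsum_insert w (Set.notMem_empty v)]
            simp [wsum, finsum_mem_empty]
        _ ≤ w v + maxCC G w S := Nat.le_add_right _ _
  · -- a component not containing v
    have hxv : (x : V) ≠ v := by
      intro hxv
      exact hvA ⟨x, (ConnectedComponent.mem_supp_iff _ _).mpr rfl, hxv⟩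
    have hx : (x : V) ∈ Sᶜ := by
      have := x.2
      simp only [Set.mem_compl_iff, Set.mem_diff, Set.mem_singleton_iff, not_and,
        not_not] at this ⊢
      intro hxS; exact hxv (this hxS)
    have hAeq : Subtype.val '' ((G.induce (S \ {v})ᶜ).connectedComponentMk x).supp
        = Subtype.val '' ((G.induce Sᶜ).connectedComponentMk ⟨x, hx⟩).supp := by
      ext u
      constructor
      · rintro ⟨u', hu'supp, rfl⟩
        have hr : (G.induce (S \ {v})ᶜ).Reachable u' x :=
          ConnectedComponent.eq.mp ((ConnectedComponent.mem_supp_iff _ _).mp hu'supp)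
        obtain ⟨p⟩ := hr
        have hsupS : ∀ z ∈ p.support, (z : V) ∈ Sᶜ := by
          intro z hz
          have hzA : (z : V) ∈ Subtype.val ''
              ((G.induce (S \ {v})ᶜ).connectedComponentMk x).supp := by
            refine ⟨z, (ConnectedComponent.mem_supp_iff _ _).mpr ?_, rfl⟩
            exact ConnectedComponent.eq.mpr (p.dropUntil z hz).reachable
          have hzv : (z : V) ≠ v := by
            intro hzv; rw [hzv] at hzA; exact hvA hzA
          have := z.2
          simp only [Set.mem_compl_iff, Set.mem_diff, Set.mem_singleton_iff, not_and,
            not_not] at this ⊢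
          intro hzS; exact hzv (this hzS)
        have hu : (u' : V) ∈ Sᶜ := hsupS u' p.start_mem_support
        exact (mem_image_supp G _ _).mpr ⟨hu, walk_restrict G hsub p hsupS hu hx⟩
      · intro hu
        obtain ⟨hu, hr⟩ := (mem_image_supp G _ _).mp hu
        have hr' : (G.induce (S \ {v})ᶜ).Reachable ⟨u, hsub hu⟩ x :=
          hr.map (G.induceHomOfLE hsub).toHom
        exact (mem_image_supp G _ _).mpr ⟨hsub hu, hr'⟩
    rw [hAeq]
    exact le_trans (le_maxCC G w ⟨_, rfl⟩) (Nat.le_add_left _ _)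

lemma isWviSet_diff [Fintype V] {G : SimpleGraph V} {w : V → ℕ} {k : ℕ} {S : Set V} {v : V}
    (hS : IsWviSet G w k S) (hvS : v ∈ S) (hred : Redundant G S v) :
    IsWviSet G w k (S \ {v}) := by
  unfold IsWviSet at *
  calc wsum w (S \ {v}) + maxCC G w (S \ {v})
      ≤ wsum w (S \ {v}) + (w v + maxCC G w S) :=
        Nat.add_le_add_left (maxCC_diff_le G w hvS hred) _
    _ = (w v + wsum w (S \ {v})) + maxCC G w S := by omega
    _ = wsum w S + maxCC G w S := by rw [← wsum_diff_singleton w hvS]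
    _ ≤ k := hS


/-- If a finite vertex-weighted graph has a `wvi(k)`-set, then it has an irredundant
`wvi(k)`-set. -/
theorem exists_irredundant_wviSet [Fintype V] (G : SimpleGraph V) (w : V → ℕ)
    (hw : ∀ v, 0 < w v) (k : ℕ) (hk : 0 < k)
    (h : ∃ S : Set V, IsWviSet G w k S) :
    ∃ S : Set V, IsWviSet G w k S ∧ Irredundant G S := by
  classical
  obtain ⟨S, hS⟩ := h
  have main : ∀ n : ℕ, ∀ S : Set V, S.ncard = n → IsWviSet G w k S →
      ∃ T : Set V, IsWviSet G w k T ∧ Irredundant G T := by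
    intro n
    induction n using Nat.strong_induction_on with
    | _ n ih =>
      intro S hcard hS
      by_cases hirr : Irredundant G S
      · exact ⟨S, hS, hirr⟩
      · have : ∃ v ∈ S, Redundant G S v := by
          unfold Irredundant at hirr
          push_neg at hirr
          simpa using hirr
        obtain ⟨v, hvS, hred⟩ := this
        have hlt : (S \ {v}).ncard < n :=
          hcard ▸ Set.ncard_diff_singleton_lt_of_mem hvS (Set.toFinite S)
        exact ih _ hlt (S \ {v}) rfl (isWviSet_diff hS hvS hred)
  exact main S.ncard S rfl hS
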